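/- Let n ≥ 2, r0 > 0, β > 2, and C1, C2 ≥ 0. Let u ∈ C²((r0,∞)) satisfy |u''(r) + (n−1)·coth(r)·u'(r)| ≤ C1 r^{(3β−3)/2} |u(r)| + C2 r^{(β−1)/2} |u'(r)| for all r > r0. Assume that: (i) for every τ > 0 there is a constant C_τ such that |u(r)| ≤ C_τ e^{−τ r^β} for all r > r0; and (ii) there exists τ0 > 0 such that for every τ ≥ τ0, ∫_{r0}^{2r} u'(s)² e^{2τ s^β} sinh(s)^{n−1} ds = o(r²) as r → +∞. Then u ≡ 0 on (r0+1, ∞). -/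

import Mathlib

open MeasureTheory Filter Real Set Asymptotics

lemma alg_key (a b c h H0 C1 C2 xp xq : ℝ) (hxp : 0 ≤ xp)
    (hh0 : 0 ≤ h) (hhH : h ≤ H0) (hq : xq ≤ 1 + xp)
    (hC1 : 0 ≤ C1) (hC2 : 0 ≤ C2)
    (hab : |c + h*b| ≤ C1*xp^2* |a| + C2*xq* |b|) :
    -((C1+1+2*C2+2*H0)*(1+xp)) * (b^2 + xp^2*a^2) ≤ 2*b*c + xp^2*(2*(a*b)) := by
  have hbb : |b| * |b| = b^2 := by rw [← abs_mul, abs_mul_self]; ring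
  have haa : |a| * |a| = a^2 := by rw [← abs_mul, abs_mul_self]; ring
  have hH00 : 0 ≤ H0 := le_trans hh0 hhH
  have h1 : b*c + h*b^2 ≥ -(C1*(xp^2*(|a| * |b|))) - C2*(xq*b^2) := by
    have h2 : -(|b| * |c + h*b|) ≤ b*(c+h*b) := by
      rw [← abs_mul]; exact neg_abs_le _
    have h3 : |b| * |c + h*b| ≤ |b| * (C1*xp^2* |a| + C2*xq* |b|) :=
      mul_le_mul_of_nonneg_left hab (abs_nonneg b)
    have e1 : |b| * (C1*xp^2* |a| + C2*xq* |b|)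
        = C1*(xp^2*(|a| * |b|)) + C2*(xq*(|b| * |b|)) := by ring
    rw [e1, hbb] at h3
    have e2 : b*(c+h*b) = b*c + h*b^2 := by ring
    rw [e2] at h2
    linarith
  have h2 : xp^2*(a*b) ≥ -(xp^2*(|a| * |b|)) := by
    have h4 : -(|a| * |b|) ≤ a*b := by rw [← abs_mul]; exact neg_abs_le _
    have := mul_le_mul_of_nonneg_left h4 (sq_nonneg xp)
    linarith [this]
  have hamg : 0 ≤ (C1+1) * (xp^3*a^2 - 2*(xp^2*(|a| * |b|)) + xp*b^2) := by
    have expand : xp*(xp* |a| - |b|)^2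
        = xp^3*(|a| * |a|) - 2*(xp^2*(|a| * |b|)) + xp*(|b| * |b|) := by ring
    rw [haa, hbb] at expand
    have := mul_nonneg (by linarith : (0:ℝ) ≤ C1+1) (mul_nonneg hxp (sq_nonneg (xp* |a| - |b|)))
    rw [expand] at this
    linarith
  have hbsq : (0:ℝ) ≤ b^2 := sq_nonneg b
  have hS4 : C2*(xq*b^2) ≤ C2*b^2 + C2*(xp*b^2) := by nlinarith [mul_nonneg hC2 hbsq]
  have hS6 : h*b^2 ≤ H0*b^2 := mul_le_mul_of_nonneg_right hhH hbsq
  nlinarith [mul_nonneg hC1 hbsq, mul_nonneg hC1 (mul_nonneg (mul_nonneg hxp hxp) (sq_nonneg a)),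
    mul_nonneg (mul_nonneg hxp hxp) (sq_nonneg a),
    mul_nonneg hC2 (mul_nonneg (mul_nonneg hxp hxp) (sq_nonneg a)),
    mul_nonneg hH00 (mul_nonneg (mul_nonneg hxp hxp) (sq_nonneg a)),
    mul_nonneg hH00 (mul_nonneg hxp hbsq),
    mul_nonneg hC2 (mul_nonneg (mul_nonneg (mul_nonneg hxp hxp) hxp) (sq_nonneg a)),
    mul_nonneg hH00 (mul_nonneg (mul_nonneg (mul_nonneg hxp hxp) hxp) (sq_nonneg a)),
    mul_nonneg hxp hbsq, h1, h2, hamg, hS4, hS6]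

set_option maxHeartbeats 1000000 in
theorem stmt_11
    (n : ℕ) (hn : 2 ≤ n) (r0 : ℝ) (hr0 : 0 < r0)
    (β : ℝ) (hβ : 2 < β) (C1 C2 : ℝ) (hC1 : 0 ≤ C1) (hC2 : 0 ≤ C2)
    (u : ℝ → ℝ) (hu : ContDiffOn ℝ 2 u (Ioi r0))
    (hineq : ∀ r ∈ Ioi r0,
      |deriv (deriv u) r + ((n : ℝ) - 1) * (Real.cosh r / Real.sinh r) * deriv u r| ≤
        C1 * r ^ ((3 * β - 3) / 2) * |u r| + C2 * r ^ ((β - 1) / 2) * |deriv u r|)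
    (hdecay : ∀ τ > (0 : ℝ), ∃ Cτ : ℝ, ∀ r ∈ Ioi r0,
      |u r| ≤ Cτ * Real.exp (-τ * r ^ β))
    (hgrad : ∃ τ0 > (0 : ℝ), ∀ τ ≥ τ0,
      (∀ᶠ r in atTop, IntegrableOn
        (fun s => deriv u s ^ 2 * Real.exp (2 * τ * s ^ β) * Real.sinh s ^ (n - 1))
        (Ioc r0 (2 * r))) ∧
      (fun r => ∫ s in Ioc r0 (2 * r),
          deriv u s ^ 2 * Real.exp (2 * τ * s ^ β) * Real.sinh s ^ (n - 1))
        =o[atTop] fun r => r ^ 2) :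
    ∀ r, r0 + 1 < r → u r = 0 := by
  obtain ⟨τ0, hτ0, hτ⟩ := hgrad
  obtain ⟨hint, ho⟩ := hτ (τ0 + 1) (by linarith)
  obtain ⟨CD, hCD⟩ := hdecay 1 one_pos
  have hCD0 : 0 ≤ CD := by
    have h1 := hCD (r0+1) (by simp only [mem_Ioi]; linarith)
    have h2 := abs_nonneg (u (r0+1))
    have h3 := Real.exp_pos (-1 * (r0+1) ^ β)
    nlinarith
  suffices H : ∀ ρ ∈ Ioi r0, u ρ = 0 by
    intro r hr
    exact H r (by simp only [mem_Ioi]; linarith)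
  intro ρ hρmem
  have hρ : r0 < ρ := hρmem
  have hρ0 : 0 < ρ := hr0.trans hρ
  set p : ℝ := (3*β-3)/4 with hpdef
  have hp0 : 0 < p := by rw [hpdef]; linarith
  have hp1β : p + 1 < β := by rw [hpdef]; linarith
  have hqp : (β-1)/2 ≤ p := by rw [hpdef]; linarith
  set H0 : ℝ := ((n:ℝ)-1) * (Real.cosh ρ / Real.sinh ρ) with hH0def
  have hn1 : (1:ℝ) ≤ (n:ℝ) - 1 := by
    have h : (2:ℝ) ≤ (n:ℝ) := by exact_mod_cast hn
    linarith
  have hsρ : 0 < Real.sinh ρ := by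
    rw [Real.sinh_pos_iff]; exact hρ0
  have hH00 : 0 ≤ H0 := by
    rw [hH0def]
    have := Real.cosh_pos (x := ρ)
    positivity
  set K : ℝ := C1 + 1 + 2*C2 + 2*H0 with hKdef
  have hK0 : 0 < K := by rw [hKdef]; linarith
  set E : ℝ → ℝ := fun x => (deriv u x)^2 + x ^ (2*p) * (u x)^2 with hEdef
  have hE0 : ∀ x : ℝ, 0 ≤ x → 0 ≤ E x := by
    intro x hx
    rw [hEdef]
    have : (0:ℝ) ≤ x ^ (2*p) := Real.rpow_nonneg hx _
    positivity
  -- differentiability of u and deriv u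
  have hudiff : ∀ x ∈ Ioi r0, HasDerivAt u (deriv u x) x := by
    intro x hx
    exact ((hu.differentiableOn (by norm_num)).differentiableAt
      (isOpen_Ioi.mem_nhds hx)).hasDerivAt
  have hcd1 : ContDiffOn ℝ 1 (deriv u) (Ioi r0) :=
    hu.deriv_of_isOpen isOpen_Ioi (by norm_num)
  have hu2 : ∀ x ∈ Ioi r0, HasDerivAt (deriv u) (deriv (deriv u) x) x := by
    intro x hx
    exact ((hcd1.differentiableOn (by norm_num)).differentiableAt
      (isOpen_Ioi.mem_nhds hx)).hasDerivAt
  have hdc : ContinuousOn (deriv u) (Ioi r0) := hcd1.continuousOn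
  -- derivative of E
  have hEd : ∀ x ∈ Ioi r0, HasDerivAt E
      (2*(deriv u x)*(deriv (deriv u) x)
        + ((2*p)*x^(2*p-1)*(u x)^2 + x^(2*p)*(2*(u x)*(deriv u x)))) x := by
    intro x hx
    have hx0 : (0:ℝ) < x := hr0.trans hx
    have h1 : HasDerivAt (fun y => (deriv u y)^2)
        (2*(deriv u x)*(deriv (deriv u) x)) x := by
      have : HasDerivAt (fun y => deriv u y ^ 2) _ x := (hu2 x hx).pow 2
      simpa [pow_one, mul_comm, mul_assoc] using this
    have h2 : HasDerivAt (fun y : ℝ => y ^ (2*p))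
        ((2*p)*x^(2*p-1)) x := Real.hasDerivAt_rpow_const (Or.inl (ne_of_gt hx0))
    have h3 : HasDerivAt (fun y => (u y)^2) (2*(u x)*(deriv u x)) x := by
      have : HasDerivAt (fun y => u y ^ 2) _ x := (hudiff x hx).pow 2
      simpa [pow_one, mul_comm, mul_assoc] using this
    have h4 := h2.mul h3
    have := h1.add h4
    rw [hEdef]
    exact this

  -- key differential inequality
  have hkey : ∀ x, ρ ≤ x → -(K*(1+x^p)) * E x ≤
      2*(deriv u x)*(deriv (deriv u) x)
        + ((2*p)*x^(2*p-1)*(u x)^2 + x^(2*p)*(2*(u x)*(deriv u x))) := by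
    intro x hρx
    have hx0 : (0:ℝ) < x := lt_of_lt_of_le hρ0 hρx
    have hxmem : x ∈ Ioi r0 := by simp only [mem_Ioi]; linarith
    have hsx : 0 < Real.sinh x := by rw [Real.sinh_pos_iff]; exact hx0
    have e1 : x ^ ((3*β-3)/2) = (x ^ p)^2 := by
      rw [← Real.rpow_natCast (x ^ p) 2, ← Real.rpow_mul hx0.le]
      congr 1
      rw [hpdef]; push_cast; ring
    have hab := hineq x hxmem
    rw [e1] at hab
    have hh0 : 0 ≤ ((n:ℝ)-1) * (Real.cosh x / Real.sinh x) :=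
      mul_nonneg (by linarith) (le_of_lt (div_pos (Real.cosh_pos x) hsx))
    have hhH : ((n:ℝ)-1) * (Real.cosh x / Real.sinh x) ≤ H0 := by
      rw [hH0def]
      have hmono : Real.cosh x / Real.sinh x ≤ Real.cosh ρ / Real.sinh ρ := by
        rw [div_le_div_iff₀ hsx hsρ]
        have hnn : 0 ≤ Real.sinh (x - ρ) := by
          rw [Real.sinh_nonneg_iff]
          linarith
        rw [Real.sinh_sub] at hnn
        linarith
      exact mul_le_mul_of_nonneg_left hmono (by linarith)
    have hqb : x ^ ((β-1)/2) ≤ 1 + x ^ p := by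
      rcases le_or_gt x 1 with hle | hlt
      · have h1 : x ^ ((β-1)/2) ≤ 1 := Real.rpow_le_one hx0.le hle (by linarith)
        have h2 : 0 ≤ x ^ p := Real.rpow_nonneg hx0.le _
        linarith
      · have h1 : x ^ ((β-1)/2) ≤ x ^ p :=
          Real.rpow_le_rpow_of_exponent_le hlt.le hqp
        linarith
    have halg := alg_key (u x) (deriv u x) (deriv (deriv u) x)
      (((n:ℝ)-1) * (Real.cosh x / Real.sinh x)) H0 C1 C2 (x ^ p) (x ^ ((β-1)/2))
      (Real.rpow_nonneg hx0.le _) hh0 hhH hqb hC1 hC2 hab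
    have e2 : x ^ (2*p) = (x ^ p)^2 := by
      rw [← Real.rpow_natCast (x ^ p) 2, ← Real.rpow_mul hx0.le]
      congr 1
      push_cast; ring
    have hnn : 0 ≤ (2*p)*x^(2*p-1)*(u x)^2 :=
      mul_nonneg (mul_nonneg (by linarith) (Real.rpow_nonneg hx0.le _)) (sq_nonneg _)
    simp only [hEdef]
    rw [hKdef, e2]
    linarith [halg, hnn]

  -- Gronwall from ρ to T
  have gron : ∀ T, ρ ≤ T → 1 ≤ T → E ρ ≤ E T * Real.exp (2*K*T^(p+1)) := by
    intro T hρT h1T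
    set G : ℝ → ℝ := fun x => K*(x + x^(p+1)/(p+1)) with hGdef
    set F : ℝ → ℝ := fun x => E x * Real.exp (G x) with hFdef
    have hIccsub : Icc ρ T ⊆ Ioi r0 := fun x hx => by
      simp only [mem_Ioi]; have := hx.1; linarith
    have hGd : ∀ x : ℝ, 0 < x → HasDerivAt G (K*(1 + x^p)) x := by
      intro x hx0
      have hpow : HasDerivAt (fun y : ℝ => y ^ (p+1)) ((p+1)*x^p) x := by
        have h := Real.hasDerivAt_rpow_const (p := p+1) (Or.inl (ne_of_gt hx0))
        have e : p + 1 - 1 = p := by ring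
        rw [e] at h
        exact h
      have h2 : HasDerivAt (fun y : ℝ => y + y^(p+1)/(p+1)) (1 + (p+1)*x^p/(p+1)) x :=
        (hasDerivAt_id x).add (hpow.div_const (p+1))
      have h3 := h2.const_mul K
      refine h3.congr_deriv ?_
      have hp1 : p + 1 ≠ 0 := by linarith
      rw [mul_div_cancel_left₀ _ hp1]
    have hFd : ∀ x ∈ Ioi r0, HasDerivAt F
        ((2*(deriv u x)*(deriv (deriv u) x)
          + ((2*p)*x^(2*p-1)*(u x)^2 + x^(2*p)*(2*(u x)*(deriv u x)))) * Real.exp (G x)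
         + E x * (Real.exp (G x) * (K*(1 + x^p)))) x := by
      intro x hx
      have hx0 : (0:ℝ) < x := hr0.trans hx
      exact (hEd x hx).mul ((hGd x hx0).exp)
    have hmono : MonotoneOn F (Icc ρ T) := by
      apply monotoneOn_of_deriv_nonneg (convex_Icc ρ T)
      · intro x hx
        exact (hFd x (hIccsub hx)).continuousAt.continuousWithinAt
      · intro x hx
        rw [interior_Icc] at hx
        exact (hFd x (hIccsub (Ioo_subset_Icc_self hx))).differentiableAt.differentiableWithinAt
      · intro x hx
        rw [interior_Icc] at hx
        have hxm : x ∈ Ioi r0 := hIccsub (Ioo_subset_Icc_self hx)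
        rw [(hFd x hxm).deriv]
        have hk := hkey x (le_of_lt hx.1)
        have hex := Real.exp_pos (G x)
        have hEx := hE0 x (le_of_lt (hr0.trans hxm))
        nlinarith [mul_le_mul_of_nonneg_right hk (le_of_lt hex)]
    have hF : F ρ ≤ F T := hmono ⟨le_refl ρ, hρT⟩ ⟨hρT, le_refl T⟩ hρT
    simp only [hFdef] at hF
    have hGρ : 0 ≤ G ρ := by
      simp only [hGdef]
      have h1 : (0:ℝ) ≤ ρ ^ (p+1) := Real.rpow_nonneg hρ0.le _
      have h2 : (0:ℝ) < p + 1 := by linarith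
      positivity
    have hstep1 : E ρ ≤ E ρ * Real.exp (G ρ) :=
      le_mul_of_one_le_right (hE0 ρ hρ0.le) (Real.one_le_exp hGρ)
    have hGT : G T ≤ 2*K*T^(p+1) := by
      simp only [hGdef]
      have h1 : T ≤ T ^ (p+1) := by
        have := Real.rpow_le_rpow_of_exponent_le h1T (show (1:ℝ) ≤ p+1 by linarith)
        rwa [Real.rpow_one] at this
      have h2 : T ^ (p+1)/(p+1) ≤ T ^ (p+1) :=
        div_le_self (Real.rpow_nonneg (by linarith) _) (by linarith)
      nlinarith [hK0.le]
    have hstep2 : E T * Real.exp (G T) ≤ E T * Real.exp (2*K*T^(p+1)) :=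
      mul_le_mul_of_nonneg_left (Real.exp_le_exp.2 hGT) (hE0 T (by linarith))
    linarith

  -- eventual bound on E ρ
  have hev : ∀ᶠ R in atTop, E ρ ≤
      (2*R + (2*R)^(2*p)*CD^2) * Real.exp (2*K*(2*R)^(p+1)) * Real.exp (-(2*R^β)) := by
    filter_upwards [hint, ho.def one_pos, eventually_ge_atTop (1:ℝ),
      eventually_ge_atTop (ρ+1), eventually_ge_atTop (r0+1)] with R hR1 hR2 hR1' hRρ hRr0
    have hR0 : (0:ℝ) < R := by linarith
    set W : ℝ → ℝ :=
      fun s => deriv u s ^ 2 * Real.exp (2 * (τ0 + 1) * s ^ β) * Real.sinh s ^ (n - 1)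
      with hWdef
    have hIb : ∫ s in Ioc r0 (2*R), W s ≤ R^2 := by
      have h1 : ‖∫ s in Ioc r0 (2*R), W s‖ ≤ 1 * ‖R^2‖ := hR2
      rw [Real.norm_eq_abs, Real.norm_eq_abs, one_mul, abs_of_nonneg (sq_nonneg R)] at h1
      exact le_trans (le_abs_self _) h1
    have hWnn : ∀ s ∈ Ioc r0 (2*R), 0 ≤ W s := by
      intro s hs
      have hs0 : (0:ℝ) < s := hr0.trans hs.1
      have := Real.sinh_pos_iff.2 hs0
      simp only [hWdef]
      positivity
    have hsub : Ioc R (2*R) ⊆ Ioc r0 (2*R) := Ioc_subset_Ioc (by linarith) le_rfl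
    have hWint2 : IntegrableOn W (Ioc R (2*R)) := hR1.mono_set hsub
    have hImono : ∫ s in Ioc R (2*R), W s ≤ ∫ s in Ioc r0 (2*R), W s := by
      apply setIntegral_mono_set hR1
      · exact (ae_restrict_iff' measurableSet_Ioc).2 (Filter.Eventually.of_forall hWnn)
      · exact HasSubset.Subset.eventuallyLE hsub
    have hIccIoi : Icc R (2*R) ⊆ Ioi r0 := by
      intro s hs; simp only [mem_Ioi]; have := hs.1; linarith
    have hbcont : ContinuousOn (fun s => deriv u s ^ 2) (Icc R (2*R)) :=
      ((hdc.mono hIccIoi).pow 2)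
    have hbint : IntegrableOn (fun s => deriv u s ^ 2) (Ioc R (2*R)) :=
      (hbcont.integrableOn_Icc).mono_set Ioc_subset_Icc_self
    have hpt : ∀ s ∈ Ioc R (2*R), deriv u s ^ 2 ≤ Real.exp (-(2*R^β)) * W s := by
      intro s hs
      have hsR : R ≤ s := le_of_lt hs.1
      have hs1 : (1:ℝ) ≤ s := le_trans hR1' hsR
      have hs0 : (0:ℝ) < s := by linarith
      have hβR : R^β ≤ s^β := Real.rpow_le_rpow hR0.le hsR (by linarith)
      have hsinh : (1:ℝ) ≤ Real.sinh s ^ (n-1) := by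
        apply one_le_pow₀
        have := Real.self_lt_sinh_iff.2 hs0
        linarith
      have hexps : Real.exp (2*R^β) ≤ Real.exp (2*(τ0+1)*s^β) := by
        apply Real.exp_le_exp.2
        have hsb : (0:ℝ) ≤ s^β := Real.rpow_nonneg hs0.le _
        nlinarith
      have h1 : Real.exp (2*R^β) ≤ Real.exp (2*(τ0+1)*s^β) * Real.sinh s ^ (n-1) := by
        nlinarith [Real.exp_pos (2*(τ0+1)*s^β)]
      have h2 := mul_le_mul_of_nonneg_left h1
        (mul_nonneg (Real.exp_pos (-(2*R^β))).le (sq_nonneg (deriv u s)))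
      have h3 : Real.exp (-(2*R^β)) * Real.exp (2*R^β) = 1 := by
        rw [← Real.exp_add]; norm_num
      simp only [hWdef]
      nlinarith [h2, h3, sq_nonneg (deriv u s)]
    have hstep : ∫ s in Ioc R (2*R), deriv u s ^ 2 ≤ Real.exp (-(2*R^β)) * R^2 := by
      have h1 : ∫ s in Ioc R (2*R), deriv u s ^ 2
          ≤ ∫ s in Ioc R (2*R), Real.exp (-(2*R^β)) * W s :=
        setIntegral_mono_on hbint (hWint2.const_mul _) measurableSet_Ioc hpt
      rw [MeasureTheory.integral_const_mul] at h1
      have h2 : Real.exp (-(2*R^β)) * (∫ s in Ioc R (2*R), W s)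
          ≤ Real.exp (-(2*R^β)) * R^2 :=
        mul_le_mul_of_nonneg_left (le_trans hImono hIb) (Real.exp_pos _).le
      linarith
    have hT : ∃ T ∈ Ioc R (2*R), deriv u T ^ 2 ≤ 2*R*Real.exp (-(2*R^β)) := by
      by_contra hcon
      push_neg at hcon
      have hlow : ∀ s ∈ Ioc R (2*R), 2*R*Real.exp (-(2*R^β)) ≤ deriv u s ^ 2 :=
        fun s hs => (hcon s hs).le
      have h1 : ∫ s in Ioc R (2*R), (2*R*Real.exp (-(2*R^β)))
          ≤ ∫ s in Ioc R (2*R), deriv u s ^ 2 := by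
        apply setIntegral_mono_on _ hbint measurableSet_Ioc hlow
        exact integrableOn_const (by rw [Real.volume_Ioc]; exact ENNReal.ofReal_ne_top)
      rw [setIntegral_const, Real.volume_real_Ioc_of_le (by linarith), smul_eq_mul] at h1
      nlinarith [Real.exp_pos (-(2*R^β)), hstep, hR0,
        mul_pos (mul_pos hR0 hR0) (Real.exp_pos (-(2*R^β)))]
    obtain ⟨T, hTmem, hTb⟩ := hT
    have hTR : R < T := hTmem.1
    have hT2R : T ≤ 2*R := hTmem.2
    have hTr0 : T ∈ Ioi r0 := by simp only [mem_Ioi]; linarith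
    have hT0 : (0:ℝ) < T := by linarith
    have hTu : (u T)^2 ≤ CD^2 * Real.exp (-(2*R^β)) := by
      have h1 := hCD T hTr0
      have h2 : (u T)^2 ≤ (CD * Real.exp (-1*T^β))^2 := by
        rw [← sq_abs]
        exact pow_le_pow_left₀ (abs_nonneg _) h1 2
      have h3 : (CD * Real.exp (-1*T^β))^2 = CD^2 * Real.exp (-(2*T^β)) := by
        rw [mul_pow, ← Real.exp_nat_mul]
        norm_num
      have h4 : Real.exp (-(2*T^β)) ≤ Real.exp (-(2*R^β)) := by
        apply Real.exp_le_exp.2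
        have : R^β ≤ T^β := Real.rpow_le_rpow hR0.le hTR.le (by linarith)
        linarith
      nlinarith [sq_nonneg CD, Real.exp_pos (-(2*T^β))]
    have hET : E T ≤ (2*R + (2*R)^(2*p)*CD^2) * Real.exp (-(2*R^β)) := by
      have hTp : T ^ (2*p) ≤ (2*R)^(2*p) :=
        Real.rpow_le_rpow hT0.le hT2R (by linarith)
      have hTpnn : (0:ℝ) ≤ T ^ (2*p) := Real.rpow_nonneg hT0.le _
      have h5 : T ^ (2*p) * (u T)^2 ≤ (2*R)^(2*p) * (CD^2 * Real.exp (-(2*R^β))) := by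
        apply mul_le_mul hTp hTu (sq_nonneg _) (le_trans hTpnn hTp)
      simp only [hEdef]
      nlinarith [Real.exp_pos (-(2*R^β))]
    have hgr := gron T (by linarith) (by linarith)
    have hexpT : Real.exp (2*K*T^(p+1)) ≤ Real.exp (2*K*(2*R)^(p+1)) := by
      apply Real.exp_le_exp.2
      have h1 : T^(p+1) ≤ (2*R)^(p+1) := Real.rpow_le_rpow hT0.le hT2R (by linarith)
      nlinarith [hK0.le]
    calc E ρ ≤ E T * Real.exp (2*K*T^(p+1)) := hgr
      _ ≤ ((2*R + (2*R)^(2*p)*CD^2) * Real.exp (-(2*R^β))) * Real.exp (2*K*(2*R)^(p+1)) := by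
          apply mul_le_mul hET hexpT (Real.exp_pos _).le
          have h6 : (0:ℝ) ≤ (2*R)^(2*p)*CD^2 :=
            mul_nonneg (Real.rpow_nonneg (by linarith) _) (sq_nonneg _)
          positivity
      _ = (2*R + (2*R)^(2*p)*CD^2) * Real.exp (2*K*(2*R)^(p+1)) * Real.exp (-(2*R^β)) := by
          ring

  have hlim : Tendsto (fun R => (2*R + (2*R)^(2*p)*CD^2) * Real.exp (2*K*(2*R)^(p+1))
      * Real.exp (-(2*R^β))) atTop (nhds 0) := by
    clear_value p H0 K E
    have hP : (fun R : ℝ => 2*R + (2*R)^(2*p)*CD^2) =o[atTop] Real.exp := by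
      have e : (fun R : ℝ => 2*(R^(1:ℝ)) + (CD^2*2^(2*p))*R^(2*p)) =ᶠ[atTop]
          (fun R : ℝ => 2*R + (2*R)^(2*p)*CD^2) := by
        filter_upwards [eventually_gt_atTop (0:ℝ)] with R hR
        rw [Real.rpow_one, Real.mul_rpow (by norm_num : (0:ℝ) ≤ 2) hR.le]
        ring
      exact (((isLittleO_rpow_exp_atTop 1).const_mul_left 2).add
        ((isLittleO_rpow_exp_atTop (2*p)).const_mul_left (CD^2*2^(2*p)))).congr' e EventuallyEq.rfl
    have hPev : ∀ᶠ R in atTop, 2*R + (2*R)^(2*p)*CD^2 ≤ Real.exp R := by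
      filter_upwards [hP.def one_pos] with R hR
      rw [Real.norm_eq_abs, Real.norm_eq_abs, one_mul, Real.abs_exp] at hR
      exact le_trans (le_abs_self _) hR
    have hβp : (0:ℝ) < β - (p+1) := by linarith
    have hb2 : ∀ᶠ R in atTop, 4*K*2^(p+1) ≤ R^(β-(p+1)) :=
      (tendsto_rpow_atTop hβp).eventually_ge_atTop _
    have hb3 : ∀ᶠ R in atTop, (2:ℝ) ≤ R^(β-1) :=
      (tendsto_rpow_atTop (by linarith : (0:ℝ) < β - 1)).eventually_ge_atTop _
    have hup : ∀ᶠ R in atTop, (2*R + (2*R)^(2*p)*CD^2) * Real.exp (2*K*(2*R)^(p+1))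
        * Real.exp (-(2*R^β)) ≤ Real.exp (-R) := by
      filter_upwards [hPev, hb2, hb3, eventually_ge_atTop (1:ℝ)] with R hPR hR2 hR3 hR1
      have hR0 : (0:ℝ) < R := by linarith
      have e1 : R^β = R^(p+1) * R^(β-(p+1)) := by
        have h := Real.rpow_add hR0 (p+1) (β-(p+1))
        rw [show (p+1)+(β-(p+1)) = β by ring] at h
        exact h
      have e2 : R^β = R * R^(β-1) := by
        have h := Real.rpow_add hR0 1 (β-1)
        rw [show (1:ℝ)+(β-1) = β by ring, Real.rpow_one] at h
        exact h
      have hp1nn : (0:ℝ) ≤ R^(p+1) := Real.rpow_nonneg hR0.le _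
      have hX : 2*K*(2*R)^(p+1) ≤ R^β/2 := by
        rw [Real.mul_rpow (by norm_num : (0:ℝ) ≤ 2) hR0.le]
        have h1 : (4*K*2^(p+1)) * R^(p+1) ≤ R^(β-(p+1)) * R^(p+1) :=
          mul_le_mul_of_nonneg_right hR2 hp1nn
        rw [← mul_comm (R^(p+1)) (R^(β-(p+1))), ← e1] at h1
        calc 2*K*(2^(p+1)*R^(p+1)) = (4*K*2^(p+1)*R^(p+1))/2 := by ring
          _ ≤ R^β/2 := by linarith
      have hRβ2 : R ≤ R^β/2 := by
        have h1 : 2*R ≤ R^(β-1)*R := mul_le_mul_of_nonneg_right hR3 hR0.le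
        nlinarith [e2]
      have hβnn : (0:ℝ) ≤ R^β := Real.rpow_nonneg hR0.le _
      calc (2*R + (2*R)^(2*p)*CD^2) * Real.exp (2*K*(2*R)^(p+1)) * Real.exp (-(2*R^β))
          ≤ Real.exp R * Real.exp (R^β/2) * Real.exp (-(2*R^β)) := by
            have hnn1 : (0:ℝ) ≤ (2*R)^(2*p)*CD^2 :=
              mul_nonneg (Real.rpow_nonneg (by linarith) _) (sq_nonneg _)
            have h1 : (2*R + (2*R)^(2*p)*CD^2) * Real.exp (2*K*(2*R)^(p+1))
                ≤ Real.exp R * Real.exp (R^β/2) :=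
              mul_le_mul hPR (Real.exp_le_exp.2 hX) (Real.exp_pos _).le (Real.exp_pos _).le
            exact mul_le_mul_of_nonneg_right h1 (Real.exp_pos _).le
        _ = Real.exp (R + R^β/2 - 2*R^β) := by
            rw [← Real.exp_add, ← Real.exp_add]
            ring_nf
        _ ≤ Real.exp (-R) := by
            apply Real.exp_le_exp.2
            linarith
    have hdown : ∀ᶠ R in atTop, 0 ≤ (2*R + (2*R)^(2*p)*CD^2)
        * Real.exp (2*K*(2*R)^(p+1)) * Real.exp (-(2*R^β)) := by
      filter_upwards [eventually_ge_atTop (0:ℝ)] with R hR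
      have hnn1 : (0:ℝ) ≤ (2*R)^(2*p)*CD^2 :=
        mul_nonneg (Real.rpow_nonneg (by linarith) _) (sq_nonneg _)
      have he1 := (Real.exp_pos (2*K*(2*R)^(p+1))).le
      have he2 := (Real.exp_pos (-(2*R^β))).le
      have : (0:ℝ) ≤ 2*R + (2*R)^(2*p)*CD^2 := by linarith
      positivity
    have hexp0 : Tendsto (fun R : ℝ => Real.exp (-R)) atTop (nhds 0) :=
      Real.tendsto_exp_atBot.comp tendsto_neg_atTop_atBot
    exact squeeze_zero' hdown hup hexp0

  have hEρ : E ρ ≤ 0 := ge_of_tendsto hlim hev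
  have hρp : 0 < ρ ^ (2*p) := Real.rpow_pos_of_pos hρ0 _
  have h2 : 0 ≤ (deriv u ρ)^2 := sq_nonneg _
  have h3 : 0 ≤ (u ρ)^2 := sq_nonneg _
  have h4 : (deriv u ρ)^2 + ρ ^ (2*p) * (u ρ)^2 ≤ 0 := hEρ
  have h5 : ρ ^ (2*p) * (u ρ)^2 = 0 :=
    le_antisymm (by linarith) (mul_nonneg (le_of_lt hρp) h3)
  have h6 : (u ρ)^2 = 0 := by
    rcases mul_eq_zero.1 h5 with h | h
    · exact absurd h (ne_of_gt hρp)
    · exact h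
  exact pow_eq_zero_iff (by norm_num) |>.1 h6
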